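/- Let G and H be finitely presented groups with G ⊑ H and H ⊑ G, and suppose G is Hopfian, i.e., every surjective group homomorphism G → G is injective. Then G and H are isomorphic. -/

import Mathlib

/-- `G` preforms `H` (written `G ⊑ H` in the paper). -/
def Preforms (G : Type*) (H : Type*) [Group G] [Group H] : Prop :=
  ∃ (k : ℕ) (t : Fin k → H), Subgroup.closure (Set.range t) = ⊤ ∧
    ∀ R : ℕ, ∃ s : Fin k → G, Subgroup.closure (Set.range s) = ⊤ ∧
      ∀ w : FreeGroup (Fin k), (FreeGroup.toWord w).length ≤ R →
        (FreeGroup.lift s w = 1 ↔ FreeGroup.lift t w = 1)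

/-- A group is finitely presented if it is the quotient of a finitely generated free
group by the normal closure of a finite set of relators. -/
def IsFinitelyPresented (K : Type*) [Group K] : Prop :=
  ∃ (n : ℕ) (Rel : Finset (FreeGroup (Fin n))),
    Nonempty (K ≃* FreeGroup (Fin n) ⧸ Subgroup.normalClosure (Rel : Set (FreeGroup (Fin n))))



/-- Factor a hom through a surjection whose kernel is contained in its kernel. -/
lemma exists_factor {A B C : Type*} [Group A] [Group B] [Group C]
    (f : A →* B) (g : A →* C) (hf : Function.Surjective f) (hk : f.ker ≤ g.ker) :
    ∃ φ : B →* C, ∀ a, φ (f a) = g a := by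
  refine ⟨(QuotientGroup.lift f.ker g hk).comp
    (QuotientGroup.quotientKerEquivOfSurjective f hf).symm.toMonoidHom, fun a => ?_⟩
  have h1 : (QuotientGroup.quotientKerEquivOfSurjective f hf).symm (f a)
      = QuotientGroup.mk a := by
    rw [MulEquiv.symm_apply_eq]
    exact (QuotientGroup.kerLift_mk f a).symm
  simp [h1]

set_option maxHeartbeats 1000000 in
/-- A f.p. group is finitely presented on any finite generating tuple. -/
lemma fp_on_gens {H : Type*} [Group H] (hH : IsFinitelyPresented H)
    {k : ℕ} (t : Fin k → H) (ht : Subgroup.closure (Set.range t) = ⊤) :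
    ∃ T : Finset (FreeGroup (Fin k)), (FreeGroup.lift t).ker = Subgroup.normalClosure ((T : Finset (FreeGroup (Fin k))) : Set (FreeGroup (Fin k))) := by
  classical
  obtain ⟨n, Rel, ⟨e⟩⟩ := hH
  set β : FreeGroup (Fin k) →* H := FreeGroup.lift t with hβdef
  have hβ : Function.Surjective β := by
    rw [← MonoidHom.range_eq_top, FreeGroup.range_lift_eq_closure, ht]
  have hαex : ∃ α : FreeGroup (Fin n) →* H, Function.Surjective α ∧
      α.ker = Subgroup.normalClosure (Rel : Set (FreeGroup (Fin n))) := by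
    refine ⟨e.symm.toMonoidHom.comp (QuotientGroup.mk' (Subgroup.normalClosure
      (Rel : Set (FreeGroup (Fin n))))), e.symm.surjective.comp (QuotientGroup.mk'_surjective _),
      ?_⟩
    ext x
    simp only [MonoidHom.mem_ker, MonoidHom.coe_comp, Function.comp_apply,
      MulEquiv.coe_toMonoidHom, QuotientGroup.mk'_apply]
    rw [MulEquiv.map_eq_one_iff, QuotientGroup.eq_one_iff]
  obtain ⟨α, hα, hkerα⟩ := hαex
  -- construct u, v
  choose x hx using fun i : Fin n => hβ (α (FreeGroup.of i))
  choose y hy using fun j : Fin k => hα (β (FreeGroup.of j))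
  set u : FreeGroup (Fin n) →* FreeGroup (Fin k) := FreeGroup.lift x with hu
  set v : FreeGroup (Fin k) →* FreeGroup (Fin n) := FreeGroup.lift y with hv
  have hβu : β.comp u = α := by
    apply FreeGroup.ext_hom; intro i
    simp [hu, hx]
  have hαv : α.comp v = β := by
    apply FreeGroup.ext_hom; intro j
    simp [hv, hy]
  set T : Finset (FreeGroup (Fin k)) :=
    Rel.image u ∪ Finset.image (fun j => (FreeGroup.of j)⁻¹ * u (v (FreeGroup.of j)))
      Finset.univ with hT
  refine ⟨T, le_antisymm ?_ ?_⟩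
  · -- ker β ≤ Subgroup.normalClosure T
    set N := Subgroup.normalClosure (T : Set (FreeGroup (Fin k))) with hN
    intro w hw
    have hq : (QuotientGroup.mk' N).comp (u.comp v) = QuotientGroup.mk' N := by
      apply FreeGroup.ext_hom; intro j
      simp only [MonoidHom.comp_apply, QuotientGroup.mk'_apply]
      rw [eq_comm, QuotientGroup.eq]
      apply Subgroup.subset_normalClosure
      simp only [hT, Finset.coe_union, Set.mem_union]
      right
      exact Finset.mem_coe.2 (Finset.mem_image.2 ⟨j, Finset.mem_univ _, rfl⟩)
    have hvw : v w ∈ α.ker := by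
      rw [MonoidHom.mem_ker]
      have h2 : α (v w) = β w := by rw [← hαv]; rfl
      rw [h2]; exact hw
    have huvw : u (v w) ∈ N := by
      have h1 : α.ker ≤ Subgroup.comap u N := by
        rw [hkerα]
        have : (N.comap u).Normal := Subgroup.Normal.comap (Subgroup.normalClosure_normal) u
        apply Subgroup.normalClosure_le_normal
        intro r hr
        simp only [SetLike.mem_coe, Subgroup.mem_comap]
        apply Subgroup.subset_normalClosure
        simp only [hT, Finset.coe_union, Set.mem_union]
        exact Or.inl (Finset.mem_coe.2 (Finset.mem_image.2 ⟨r, hr, rfl⟩))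
      exact h1 hvw
    have hqw : QuotientGroup.mk' N w = 1 := by
      have := congrArg (fun f : FreeGroup (Fin k) →* _ => f w) hq
      simp only [MonoidHom.comp_apply] at this
      rw [← this]
      simpa [QuotientGroup.eq_one_iff] using huvw
    rwa [← QuotientGroup.ker_mk' N, MonoidHom.mem_ker]
  · -- Subgroup.normalClosure T ≤ ker β
    apply Subgroup.normalClosure_le_normal
    intro z hz
    simp only [hT, Finset.coe_union, Set.mem_union, Finset.coe_image, Set.mem_image,
      Finset.mem_coe] at hz
    rcases hz with ⟨r, hr, rfl⟩ | hz
    · have : β (u r) = α r := by rw [← hβu]; rfl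
      have hr1 : α r = 1 := by
        rw [← MonoidHom.mem_ker, hkerα]
        exact Subgroup.subset_normalClosure hr
      simpa [SetLike.mem_coe, MonoidHom.mem_ker, this] using hr1
    · obtain ⟨j, -, rfl⟩ := hz
      have : β (u (v (FreeGroup.of j))) = β (FreeGroup.of j) := by
        have h1 : β (u (v (FreeGroup.of j))) = α (v (FreeGroup.of j)) := by rw [← hβu]; rfl
        rw [h1, ← hαv]; rfl
      simp [SetLike.mem_coe, MonoidHom.mem_ker, this]


/-- The key step: `G ⊑ H` with `H` f.p. gives a surjection `H ↠ G`. -/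
lemma exists_surj {G H : Type*} [Group G] [Group H]
    (hH : IsFinitelyPresented H) (hGH : Preforms G H) :
    ∃ φ : H →* G, Function.Surjective φ := by
  obtain ⟨k, t, ht, hs⟩ := hGH
  obtain ⟨T, hT⟩ := fp_on_gens hH t ht
  set R0 := T.sup (fun w => (FreeGroup.toWord w).length) with hR0
  obtain ⟨s, hsgen, hws⟩ := hs R0
  have hβ : Function.Surjective (FreeGroup.lift t) := by
    rw [← MonoidHom.range_eq_top, FreeGroup.range_lift_eq_closure, ht]
  have hsle : (FreeGroup.lift t).ker ≤ (FreeGroup.lift s).ker := by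
    rw [hT]
    apply Subgroup.normalClosure_le_normal
    intro w hw
    have hlen : (FreeGroup.toWord w).length ≤ R0 := by
      rw [hR0]
      exact Finset.le_sup (f := fun w => (FreeGroup.toWord w).length) (Finset.mem_coe.1 hw)
    have hwt : FreeGroup.lift t w = 1 := by
      rw [← MonoidHom.mem_ker, hT]
      exact Subgroup.subset_normalClosure hw
    exact (hws w hlen).2 hwt
  obtain ⟨φ, hφ⟩ := exists_factor (FreeGroup.lift t) (FreeGroup.lift s) hβ hsle
  refine ⟨φ, fun g => ?_⟩
  have hssurj : Function.Surjective (FreeGroup.lift s) := by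
    rw [← MonoidHom.range_eq_top, FreeGroup.range_lift_eq_closure, hsgen]
  obtain ⟨w, hw⟩ := hssurj g
  exact ⟨FreeGroup.lift t w, by rw [hφ, hw]⟩

/-- If `G` and `H` are finitely presented groups with `G ⊑ H ⊑ G` and `G` is Hopfian,
then `G` and `H` are isomorphic. -/
theorem isomorphic_of_preforms_of_hopfian
    (G H : Type*) [Group G] [Group H]
    (hG : IsFinitelyPresented G) (hH : IsFinitelyPresented H)
    (hGH : Preforms G H) (hHG : Preforms H G)
    (hHopf : ∀ f : G →* G, Function.Surjective f → Function.Injective f) :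
    Nonempty (G ≃* H) := by
  obtain ⟨φ, hφ⟩ := exists_surj hH hGH
  obtain ⟨ψ, hψ⟩ := exists_surj hG hHG
  have hcomp : Function.Surjective (φ.comp ψ) := hφ.comp hψ
  have hinj : Function.Injective (φ.comp ψ) := hHopf _ hcomp
  have hψinj : Function.Injective ψ := fun a b h => hinj (by simp [MonoidHom.comp_apply, h])
  exact ⟨MulEquiv.ofBijective ψ ⟨hψinj, hψ⟩⟩
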